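/- From the Caccioppoli-type inequality ∫ η²|u|² dμ ≤ t ∫ |u|²|∇η|² dμ valid for all Lipschitz η ≥ 0 vanishing on E (where u = (I+tL)^{−1}f, f supported in E), one deduces for η = e^{αζ}−1 with ζ Lipschitz, 0 ≤ ζ, ζ = 0 on E, and α = 1/(2√t‖∇ζ‖_∞): ∫ e^{2αζ}|u|² dμ ≤ 4 ∫ |f|² dμ. -/

import Mathlib

open MeasureTheory Metric Set Real

/-- The Euclidean Laplacian of `f`. -/
noncomputable def lap {n : ℕ} (f : EuclideanSpace ℝ (Fin n) → ℝ)
    (x : EuclideanSpace ℝ (Fin n)) : ℝ :=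
  ∑ i, fderiv ℝ (fun y => fderiv ℝ f y (EuclideanSpace.single i 1)) x (EuclideanSpace.single i 1)

/-- The weighted Laplacian `L f = −Δf + ∇v·∇f`. -/
noncomputable def Lop {n : ℕ} (v f : EuclideanSpace ℝ (Fin n) → ℝ)
    (x : EuclideanSpace ℝ (Fin n)) : ℝ :=
  -(lap f x) + (inner ℝ (gradient v x) (gradient f x) : ℝ)

/-- The measure `dμ = e^{−v} dx`. -/
noncomputable def muW {n : ℕ} (v : EuclideanSpace ℝ (Fin n) → ℝ) :
    Measure (EuclideanSpace ℝ (Fin n)) :=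
  MeasureTheory.volume.withDensity fun x => ENNReal.ofReal (Real.exp (-v x))

lemma norm_gradient_eq {n : ℕ} (h : EuclideanSpace ℝ (Fin n) → ℝ)
    (x : EuclideanSpace ℝ (Fin n)) : ‖gradient h x‖ = ‖fderiv ℝ h x‖ := by
  simp [gradient, LinearIsometryEquiv.norm_map]

/-- From the Caccioppoli-type inequality `∫ η²u² dμ ≤ t ∫ u²|∇η|² dμ` (for nonnegative `η`
vanishing on `E`) and `‖u‖ ≤ ‖f‖`, one deduces, for `ζ ≥ 0` vanishing on `E` with
`‖∇ζ‖_∞ ≤ K` and `α = 1/(2√t K)`, that `∫ e^{2αζ}u² dμ ≤ 4∫ f² dμ`. -/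
theorem stmt_13 {n : ℕ} (μ : Measure (EuclideanSpace ℝ (Fin n))) [SigmaFinite μ]
    (E : Set (EuclideanSpace ℝ (Fin n))) (t K : ℝ) (ht : 0 < t) (hK : 0 < K)
    (u f : EuclideanSpace ℝ (Fin n) → ℝ)
    (hu : ∫ x, u x ^ 2 ∂μ ≤ ∫ x, f x ^ 2 ∂μ)
    (hcacc : ∀ η : EuclideanSpace ℝ (Fin n) → ℝ, Differentiable ℝ η →
      (∀ x, 0 ≤ η x) → (∀ x ∈ E, η x = 0) →
      ∫ x, η x ^ 2 * u x ^ 2 ∂μ ≤ t * ∫ x, u x ^ 2 * ‖gradient η x‖ ^ 2 ∂μ)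
    (ζ : EuclideanSpace ℝ (Fin n) → ℝ) (hζ : Differentiable ℝ ζ)
    (hζ0 : ∀ x, 0 ≤ ζ x) (hζE : ∀ x ∈ E, ζ x = 0)
    (hζK : ∀ x, ‖gradient ζ x‖ ≤ K) :
    ∫ x, Real.exp (2 * (1 / (2 * Real.sqrt t * K)) * ζ x) * u x ^ 2 ∂μ
      ≤ 4 * ∫ x, f x ^ 2 ∂μ := by
  have hf2 : (0:ℝ) ≤ ∫ x, f x ^ 2 ∂μ := integral_nonneg fun x => sq_nonneg _
  set α : ℝ := 1 / (2 * Real.sqrt t * K) with hαdef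
  have hst : 0 < Real.sqrt t := Real.sqrt_pos.2 ht
  have hα : 0 < α := by positivity
  set g : EuclideanSpace ℝ (Fin n) → ℝ := fun x => Real.exp (2 * α * ζ x) * u x ^ 2 with hgdef
  show ∫ x, g x ∂μ ≤ 4 * ∫ x, f x ^ 2 ∂μ
  by_cases hg : Integrable g μ
  swap
  · rw [integral_undef hg]; linarith
  -- the test function η
  set η : EuclideanSpace ℝ (Fin n) → ℝ := fun x => Real.exp (α * ζ x) - 1 with hηdef
  have hηd : Differentiable ℝ η := (Real.differentiable_exp.comp (hζ.const_mul α)).sub_const 1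
  have hη0 : ∀ x, 0 ≤ η x := fun x =>
    sub_nonneg.2 (Real.one_le_exp (mul_nonneg hα.le (hζ0 x)))
  have hηE : ∀ x ∈ E, η x = 0 := by
    intro x hx; simp [hηdef, hζE x hx]
  have hfd : ∀ x, fderiv ℝ η x = Real.exp (α * ζ x) • (α • fderiv ℝ ζ x) := by
    intro x
    have h1 : HasFDerivAt (fun y => α * ζ y) (α • fderiv ℝ ζ x) x :=
      ((hζ x).hasFDerivAt).const_mul α
    have h2 := (Real.hasDerivAt_exp (α * ζ x)).comp_hasFDerivAt x h1
    exact ((h2.sub_const 1).fderiv)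
  have hexpsq : ∀ x, Real.exp (α * ζ x) ^ 2 = Real.exp (2 * α * ζ x) := by
    intro x; rw [sq, ← Real.exp_add]; ring_nf
  have hgradη : ∀ x, ‖gradient η x‖ ^ 2 = Real.exp (2 * α * ζ x) * (α ^ 2 * ‖fderiv ℝ ζ x‖ ^ 2) := by
    intro x
    rw [norm_gradient_eq, hfd x, norm_smul, norm_smul, mul_pow, mul_pow,
      Real.norm_eq_abs, Real.norm_eq_abs, Real.abs_exp, abs_of_pos hα, hexpsq x]
  -- measurability / integrability
  have husq : AEStronglyMeasurable (fun x => u x ^ 2) μ := by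
    have : (fun x => u x ^ 2) = fun x => Real.exp (-(2 * α * ζ x)) * g x := by
      funext x
      simp only [hgdef]
      rw [← mul_assoc, ← Real.exp_add]
      simp
    rw [this]
    exact ((Real.continuous_exp.comp ((continuous_const.mul hζ.continuous).neg)).aestronglyMeasurable).mul
      hg.aestronglyMeasurable
  have hexp1 : ∀ x, (1:ℝ) ≤ Real.exp (2 * α * ζ x) := fun x =>
    Real.one_le_exp (mul_nonneg (by positivity) (hζ0 x))
  have hu2int : Integrable (fun x => u x ^ 2) μ := by
    refine hg.mono husq (Filter.Eventually.of_forall fun x => ?_)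
    have h1 : (0:ℝ) ≤ u x ^ 2 := sq_nonneg _
    have h2 : (0:ℝ) ≤ g x := mul_nonneg (Real.exp_pos _).le h1
    rw [Real.norm_eq_abs, Real.norm_eq_abs, abs_of_nonneg h1, abs_of_nonneg h2]
    simpa [hgdef] using mul_le_mul_of_nonneg_right (hexp1 x) h1
  have hη2int : Integrable (fun x => η x ^ 2 * u x ^ 2) μ := by
    refine hg.mono (((hηd.continuous.pow 2).aestronglyMeasurable).mul husq)
      (Filter.Eventually.of_forall fun x => ?_)
    have h1 : (0:ℝ) ≤ u x ^ 2 := sq_nonneg _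
    have hηle : η x ^ 2 ≤ Real.exp (2 * α * ζ x) := by
      rw [← hexpsq x]
      have : η x ≤ Real.exp (α * ζ x) := by
        simp only [hηdef]; linarith [Real.exp_pos (α * ζ x)]
      exact pow_le_pow_left₀ (hη0 x) this 2
    have h2 : (0:ℝ) ≤ η x ^ 2 * u x ^ 2 := mul_nonneg (sq_nonneg _) h1
    have h3 : (0:ℝ) ≤ g x := mul_nonneg (Real.exp_pos _).le h1
    rw [Real.norm_eq_abs, Real.norm_eq_abs, abs_of_nonneg h2, abs_of_nonneg h3]
    exact mul_le_mul_of_nonneg_right hηle h1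
  -- main inequalities
  have hB := hcacc η hηd hη0 hηE
  have hζKf : ∀ x, ‖fderiv ℝ ζ x‖ ≤ K := fun x => by
    rw [← norm_gradient_eq]; exact hζK x
  have step2 : ∫ x, u x ^ 2 * ‖gradient η x‖ ^ 2 ∂μ ≤ α ^ 2 * K ^ 2 * ∫ x, g x ∂μ := by
    rw [← integral_const_mul]
    refine integral_mono_of_nonneg (Filter.Eventually.of_forall fun x =>
      mul_nonneg (sq_nonneg _) (sq_nonneg _)) (hg.const_mul _)
      (Filter.Eventually.of_forall fun x => ?_)
    dsimp only
    rw [hgradη x]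
    have h1 : ‖fderiv ℝ ζ x‖ ^ 2 ≤ K ^ 2 := pow_le_pow_left₀ (norm_nonneg _) (hζKf x) 2
    have h2 : (0:ℝ) ≤ u x ^ 2 * Real.exp (2 * α * ζ x) * α ^ 2 :=
      mul_nonneg (mul_nonneg (sq_nonneg _) (Real.exp_pos _).le) (sq_nonneg _)
    calc u x ^ 2 * (Real.exp (2 * α * ζ x) * (α ^ 2 * ‖fderiv ℝ ζ x‖ ^ 2))
        = u x ^ 2 * Real.exp (2 * α * ζ x) * α ^ 2 * ‖fderiv ℝ ζ x‖ ^ 2 := by ring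
      _ ≤ u x ^ 2 * Real.exp (2 * α * ζ x) * α ^ 2 * K ^ 2 :=
          mul_le_mul_of_nonneg_left h1 h2
      _ = α ^ 2 * K ^ 2 * g x := by simp only [hgdef]; ring
  have hαK : t * (α ^ 2 * K ^ 2) = 1 / 4 := by
    have h1 : Real.sqrt t * Real.sqrt t = t := Real.mul_self_sqrt ht.le
    rw [hαdef]
    field_simp
    nlinarith [h1]
  have step3 : ∫ x, g x ∂μ ≤ 2 * ∫ x, η x ^ 2 * u x ^ 2 ∂μ + 2 * ∫ x, u x ^ 2 ∂μ := by
    have hFint : Integrable (fun x => 2 * (η x ^ 2 * u x ^ 2) + 2 * u x ^ 2) μ :=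
      (hη2int.const_mul 2).add (hu2int.const_mul 2)
    have hmono := integral_mono hg hFint (fun x => ?_)
    · rwa [integral_add (hη2int.const_mul 2) (hu2int.const_mul 2),
        integral_const_mul, integral_const_mul] at hmono
    · dsimp only
      have h1 : Real.exp (2 * α * ζ x) = (η x + 1) ^ 2 := by
        simp only [hηdef]; rw [sub_add_cancel, hexpsq x]
      have h2 : (η x + 1) ^ 2 ≤ 2 * η x ^ 2 + 2 := by nlinarith [sq_nonneg (η x - 1)]
      have h3 : g x ≤ (2 * η x ^ 2 + 2) * u x ^ 2 := by
        simp only [hgdef]; rw [h1]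
        exact mul_le_mul_of_nonneg_right h2 (sq_nonneg _)
      calc g x ≤ (2 * η x ^ 2 + 2) * u x ^ 2 := h3
        _ = 2 * (η x ^ 2 * u x ^ 2) + 2 * u x ^ 2 := by ring
  have key : ∫ x, η x ^ 2 * u x ^ 2 ∂μ ≤ (1/4) * ∫ x, g x ∂μ := by
    calc ∫ x, η x ^ 2 * u x ^ 2 ∂μ ≤ t * ∫ x, u x ^ 2 * ‖gradient η x‖ ^ 2 ∂μ := hB
      _ ≤ t * (α ^ 2 * K ^ 2 * ∫ x, g x ∂μ) := by
          exact mul_le_mul_of_nonneg_left step2 ht.le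
      _ = (1/4) * ∫ x, g x ∂μ := by rw [← mul_assoc, hαK]
  linarith
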